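/- arXiv:1701.06125 — 10 statements merged into one kernel-verified Lean document; each statement's English description precedes it below -/
import Mathlib

section
/- Let K be a field of characteristic zero and let φ be any K-algebra endomorphism of the polynomial ring K[x]. Then the image of the map δ = I - φ (where I is the identity map of K[x]) is a Mathieu subspace of K[x]. -/
/-!
A `K`-algebra endomorphism of `K[x]` is `f ↦ f ∘ p` with `p = φ x`, so its E-derivation has image
`V = {f - f ∘ p}`. If `a ^ m = f - f ∘ p`, telescoping along the iterates `pᵢ` of `p` gives
`∑_{i<k} (a ∘ pᵢ) ^ m = f - f ∘ pₖ`, which is divisible by `x - pₖ`.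

* If `pᵣ = x` for some `r > 0`, these power sums vanish for all `m ≥ 1`, which in characteristic
  zero forces `a = 0`.
* If `d = deg p ≥ 2`, the power sums for `m ≤ k` bound the multiplicity of every root of `x - pₖ`
  by `k` times its multiplicity as a root of `a`. Counting roots in an algebraic closure gives
  `d ^ k ≤ k deg a`, absurd for large `k` unless `a = 0`.
* Otherwise `p = x + β` with `β ≠ 0`, and `V = K[x]`; or `p = α (x - c) + c` with `α` not a root of
  unity, and `V` is the ideal of polynomials vanishing at `c`.

In the first two cases `0` is the only element all of whose powers lie in `V`; in the last two
`V` is an ideal. Either way `V` is a Mathieu subspace.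
-/

open Polynomial

/-- A `K`-subspace `V` of `K[x]` is a Mathieu subspace if for all `a, b ∈ K[x]` with
`a^m ∈ V` for all `m ≥ 1`, one has `a^m * b ∈ V` for all sufficiently large `m`. -/
def IsMathieuSubspace {K : Type*} [Field K] (V : Submodule K (Polynomial K)) : Prop :=
  ∀ a b : Polynomial K, (∀ m : ℕ, 1 ≤ m → a ^ m ∈ V) →
    ∃ N : ℕ, ∀ m : ℕ, N ≤ m → a ^ m * b ∈ V

open Finset

namespace Finset

variable {R : Type*} [CommRing R] [IsDomain R]

theorem eq_zero_of_forall_sum_mul_pow_eq_zero {T : Finset R} {w : R → R}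
    (h : ∀ j < #T, ∑ b ∈ T, w b * b ^ j = 0) : ∀ b ∈ T, w b = 0 := by
  let e : Fin #T ≃ T := T.equivFin.symm
  have hw : (fun j => w (e j)) = 0 := by
    refine Matrix.eq_zero_of_forall_pow_sum_mul_pow_eq_zero (f := fun j => (e j : R))
      (fun i j hij => e.injective (Subtype.ext hij)) fun i => ?_
    rw [e.sum_comp (fun b => w b * (b : R) ^ (i : ℕ)), T.sum_coe_sort (fun b => w b * b ^ (i : ℕ))]
    exact h i i.2
  intro b hb
  simpa using congrFun hw (e.symm ⟨b, hb⟩)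

theorem eq_zero_of_forall_sum_pow_eq_zero [CharZero R] {ι : Type*} {s : Finset ι} {f : ι → R}
    (h : ∀ m, 1 ≤ m → m ≤ #s → ∑ i ∈ s, f i ^ m = 0) : ∀ i ∈ s, f i = 0 := by
  classical
  -- group the terms by value: `b` occurs with weight `#{i ∈ s | f i = b} * b`
  have hweights := eq_zero_of_forall_sum_mul_pow_eq_zero (T := s.image f)
    (w := fun b => #{i ∈ s | f i = b} * b) fun j hj => by
      have := h (j + 1) j.succ_pos (hj.trans_le card_image_le)
      rw [sum_comp (fun b => b ^ (j + 1)) f] at this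
      simpa only [nsmul_eq_mul, pow_succ', mul_assoc] using this
  intro i hi
  have hcard : (#{j ∈ s | f j = f i} : R) ≠ 0 :=
    Nat.cast_ne_zero.2 (card_pos.2 ⟨i, by simp [hi]⟩).ne'
  exact (mul_eq_zero.1 (hweights _ (mem_image_of_mem f hi))).resolve_left hcard

end Finset

theorem Nat.exists_mul_lt_two_pow (n : ℕ) : ∃ k, 0 < k ∧ k * n < 2 ^ k := by
  refine ⟨4 * (n + 1), by omega, ?_⟩
  have h : 2 * (n + 1) < 2 ^ (2 * (n + 1)) := Nat.lt_two_pow_self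
  have h2 : (2 ^ (2 * (n + 1))) ^ 2 = 2 ^ (4 * (n + 1)) := by rw [← pow_mul]; ring_nf
  nlinarith

namespace Polynomial

section CommRing

variable {R : Type*} [CommRing R]

theorem le_card_mul_rootMultiplicity_of_dvd_sum_pow [IsDomain R] [CharZero R] {ι : Type*}
    {s : Finset ι} {A : ι → R[X]} {c : R} {e : ℕ} (hA : ∀ i ∈ s, A i ≠ 0)
    (h : ∀ m, 1 ≤ m → m ≤ #s → (X - C c) ^ e ∣ ∑ i ∈ s, A i ^ m) :
    ∀ i ∈ s, e ≤ #s * rootMultiplicity c (A i) := by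
  intro i hi
  obtain ⟨i₀, hi₀, hmin⟩ := s.exists_min_image (fun i => rootMultiplicity c (A i)) ⟨i, hi⟩
  set t := rootMultiplicity c (A i₀)
  have hdvd : ∀ j ∈ s, (X - C c) ^ t ∣ A j := fun j hj =>
    (pow_dvd_pow _ (hmin j hj)).trans (pow_rootMultiplicity_dvd _ _)
  choose! D hD using hdvd
  have hD₀ : (D i₀).eval c ≠ 0 := fun h0 => by
    have : (X - C c) ^ (t + 1) ∣ A i₀ := by
      rw [hD i₀ hi₀, pow_succ]
      exact mul_dvd_mul_left _ (dvd_iff_isRoot.2 h0)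
    exact (le_rootMultiplicity_iff (hA i₀ hi₀)).2 this |>.not_gt t.lt_succ_self
  obtain ⟨m, hm, hms, hne⟩ : ∃ m, 1 ≤ m ∧ m ≤ #s ∧ ∑ j ∈ s, (D j).eval c ^ m ≠ 0 := by
    by_contra! h0
    exact hD₀ (eq_zero_of_forall_sum_pow_eq_zero h0 i₀ hi₀)
  have hsum : ∑ j ∈ s, A j ^ m = (X - C c) ^ (t * m) * ∑ j ∈ s, D j ^ m := by
    rw [mul_sum]
    exact sum_congr rfl fun j hj => by rw [hD j hj, mul_pow, pow_mul]
  -- `c` is not a root of the cofactor, so `c` is a root of the sum of multiplicity exactly `t * m`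
  have he : e ≤ t * m := by
    by_contra! hlt
    have : (X - C c) ^ (t * m) * (X - C c) ∣ (X - C c) ^ (t * m) * ∑ j ∈ s, D j ^ m := by
      rw [← pow_succ, ← hsum]
      exact (pow_dvd_pow _ hlt).trans (h m hm hms)
    rw [mul_dvd_mul_iff_left (pow_ne_zero _ (X_sub_C_ne_zero c)), dvd_iff_isRoot, IsRoot,
      eval_finsetSum] at this
    simp only [eval_pow] at this
    exact hne this
  calc e ≤ t * m := he
    _ ≤ rootMultiplicity c (A i) * #s := Nat.mul_le_mul (hmin i hi) hms
    _ = #s * rootMultiplicity c (A i) := mul_comm _ _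

theorem X_sub_dvd_sub_comp (f q : R[X]) : X - q ∣ f - f.comp q := by
  simpa [eval_map, comp] using sub_dvd_eval_sub X q (f.map C)

theorem sum_range_pow_comp_iterate {a f p : R[X]} {m : ℕ} (h : f - f.comp p = a ^ m) (k : ℕ) :
    ∑ i ∈ range k, a.comp (p.comp^[i] X) ^ m = f - f.comp (p.comp^[k] X) := by
  have := sum_range_sub' (fun i => f.comp (p.comp^[i] X)) k
  simp only [Function.iterate_succ_apply', ← comp_assoc, ← sub_comp, h, pow_comp,
    Function.iterate_zero_apply, comp_X] at this
  exact this

noncomputable def eDerivImage (p : R[X]) : Submodule R R[X] :=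
  LinearMap.range (LinearMap.id - (aeval p).toLinearMap)

theorem mem_eDerivImage {p g : R[X]} : g ∈ eDerivImage p ↔ ∃ f, f - f.comp p = g := by
  simp [eDerivImage, comp_eq_aeval]

theorem eq_zero_of_forall_pow_mem_eDerivImage_of_iterate_eq_X [IsDomain R] [CharZero R]
    {p a : R[X]} {r : ℕ} (hr : 0 < r) (hp : p.comp^[r] X = X)
    (ha : ∀ m, 1 ≤ m → a ^ m ∈ eDerivImage p) : a = 0 := by
  have hsum : ∀ m, 1 ≤ m → m ≤ #(range r) → ∑ i ∈ range r, a.comp (p.comp^[i] X) ^ m = 0 :=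
    fun m hm _ => by
      obtain ⟨f, hf⟩ := mem_eDerivImage.1 (ha m hm)
      rw [sum_range_pow_comp_iterate hf, hp, comp_X, sub_self]
  simpa using eq_zero_of_forall_sum_pow_eq_zero hsum 0 (mem_range.2 hr)

theorem iterate_comp_affine (α c : R) (n : ℕ) :
    (C α * (X - C c) + C c).comp^[n] X = C (α ^ n) * (X - C c) + C c := by
  induction n with
  | zero => simp
  | succ n ih =>
    rw [Function.iterate_succ_apply', ih]
    simp only [add_comp, mul_comp, sub_comp, C_comp, X_comp, pow_succ', C_mul]
    ring

theorem X_sub_C_pow_comp_affine (α c : R) (n : ℕ) :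
    ((X - C c) ^ n).comp (C α * (X - C c) + C c) = C (α ^ n) * (X - C c) ^ n := by
  simp [pow_comp, mul_pow]

theorem mem_of_forall_X_sub_C_pow_mem {V : Submodule R R[X]} {c : R}
    (hV : ∀ n, 0 < n → (X - C c) ^ n ∈ V) {g : R[X]} (hg : g.eval c = 0) : g ∈ V := by
  rw [← sum_taylor_eq g c, Polynomial.sum]
  refine V.sum_mem fun i _ => ?_
  rcases Nat.eq_zero_or_pos i with rfl | hi
  · simp [taylor_coeff_zero, hg]
  · rw [← smul_eq_C_mul]
    exact V.smul_mem _ (hV i hi)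

end CommRing

section Field

variable {K : Type*} [Field K]

theorem eq_zero_of_forall_pow_mem_eDerivImage_of_two_le_natDegree [CharZero K] {p a : K[X]}
    (hp : 2 ≤ p.natDegree) (ha : ∀ m, 1 ≤ m → a ^ m ∈ eDerivImage p) : a = 0 := by
  classical
  by_contra ha₀
  obtain ⟨k, hk, hkn⟩ := Nat.exists_mul_lt_two_pow a.natDegree
  let ι := algebraMap K (AlgebraicClosure K)
  let W := (X - p.comp^[k] X).map ι
  let A i := (a.comp (p.comp^[i] X)).map ι
  have hWdeg : W.natDegree = p.natDegree ^ k := by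
    have : 1 < p.natDegree ^ k := Nat.one_lt_pow hk.ne' hp
    rw [natDegree_map, natDegree_sub_eq_right_of_natDegree_lt] <;> simp [this]
  have hA : ∀ i ∈ range k, A i ≠ 0 := fun i _ => by
    refine Polynomial.map_ne_zero fun h0 => ?_
    rcases comp_eq_zero_iff.1 h0 with h0 | ⟨-, h0⟩
    · exact ha₀ h0
    · have := congrArg natDegree h0
      rw [natDegree_iterate_comp, natDegree_X, mul_one, natDegree_C] at this
      exact (pow_pos (by omega) i).ne' this
  have hdvd : ∀ m, 1 ≤ m → W ∣ ∑ i ∈ range k, A i ^ m := fun m hm => by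
    obtain ⟨f, hf⟩ := mem_eDerivImage.1 (ha m hm)
    have := Polynomial.map_dvd ι (X_sub_dvd_sub_comp f (p.comp^[k] X))
    rw [← sum_range_pow_comp_iterate hf] at this
    simpa [W, A, Polynomial.map_sum, Polynomial.map_pow] using this
  have hroots : W.roots ≤ k • (a.map ι).roots := by
    refine Multiset.le_iff_count.2 fun c => ?_
    rw [Multiset.count_nsmul, count_roots, count_roots]
    simpa [A] using le_card_mul_rootMultiplicity_of_dvd_sum_pow hA
      (fun m hm _ => (pow_rootMultiplicity_dvd W c).trans (hdvd m hm)) 0 (mem_range.2 hk)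
  have hcard := Multiset.card_le_card hroots
  rw [Multiset.card_nsmul, IsAlgClosed.card_roots_eq_natDegree, hWdeg] at hcard
  have : 2 ^ k ≤ k * a.natDegree := calc
    2 ^ k ≤ p.natDegree ^ k := Nat.pow_le_pow_left hp k
    _ ≤ k * (a.map ι).roots.card := hcard
    _ ≤ k * a.natDegree := Nat.mul_le_mul_left k ((card_roots' _).trans natDegree_map_le)
  omega

theorem mem_eDerivImage_affine_iff {α c : K} (hα : ∀ n, 0 < n → α ^ n ≠ 1) {g : K[X]} :
    g ∈ eDerivImage (C α * (X - C c) + C c) ↔ g.eval c = 0 := by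
  refine ⟨fun hg => ?_, mem_of_forall_X_sub_C_pow_mem fun n hn => ?_⟩
  · obtain ⟨f, rfl⟩ := mem_eDerivImage.1 hg
    simp
  · refine mem_eDerivImage.2 ⟨C (1 - α ^ n)⁻¹ * (X - C c) ^ n, ?_⟩
    have hu : C (1 - α ^ n)⁻¹ * (1 - C (α ^ n)) = 1 := by
      rw [← C_1, ← C_sub, ← C_mul, inv_mul_cancel₀ (sub_ne_zero.2 (hα n hn).symm)]
    rw [mul_comp, C_comp, X_sub_C_pow_comp_affine]
    linear_combination (X - C c) ^ n * hu

theorem degree_X_pow_sub_X_add_C_pow [CharZero K] {β : K} (hβ : β ≠ 0) (n : ℕ) :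
    (X ^ (n + 1) - (X + C β) ^ (n + 1)).degree = (n : WithBot ℕ) := by
  refine degree_eq_of_le_of_coeff_ne_zero ((degree_le_iff_coeff_zero _ _).2 fun m hm => ?_) ?_
  · have hm' : n + 1 ≤ m := by exact_mod_cast hm
    rcases hm'.eq_or_lt with rfl | hlt
    · simp [coeff_X_add_C_pow]
    · simp [coeff_X_add_C_pow, coeff_X_pow, hlt.ne', Nat.choose_eq_zero_of_lt hlt]
  · simp [coeff_X_add_C_pow, hβ, Nat.cast_add_one_ne_zero]

theorem eDerivImage_X_add_C [CharZero K] {β : K} (hβ : β ≠ 0) : eDerivImage (X + C β) = ⊤ := by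
  let S : Sequence K :=
    ⟨fun n => X ^ (n + 1) - (X + C β) ^ (n + 1), degree_X_pow_sub_X_add_C_pow hβ⟩
  rw [eq_top_iff, ← S.span fun n => isUnit_iff_ne_zero.2 (leadingCoeff_ne_zero.2 (S.ne_zero n)),
    Submodule.span_le]
  rintro _ ⟨n, rfl⟩
  exact mem_eDerivImage.2 ⟨X ^ (n + 1), by simp [S]⟩

end Field

end Polynomial

section Mathieu

variable {K : Type*} [Field K]

theorem IsMathieuSubspace.of_mul_mem {V : Submodule K K[X]} (hV : ∀ f g, f ∈ V → f * g ∈ V) :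
    IsMathieuSubspace V :=
  fun _ _ ha => ⟨1, fun m hm => hV _ _ (ha m hm)⟩

theorem IsMathieuSubspace.of_forall_pow_mem_eq_zero {V : Submodule K K[X]}
    (hV : ∀ a, (∀ m, 1 ≤ m → a ^ m ∈ V) → a = 0) : IsMathieuSubspace V :=
  fun a _ ha => ⟨1, fun m hm => by simp [hV a ha, zero_pow (by omega : m ≠ 0)]⟩

theorem isMathieuSubspace_eDerivImage [CharZero K] (p : K[X]) :
    IsMathieuSubspace (eDerivImage p) := by
  rcases le_or_gt 2 p.natDegree with hp | hp
  · exact .of_forall_pow_mem_eq_zero fun _ =>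
      eq_zero_of_forall_pow_mem_eDerivImage_of_two_le_natDegree hp
  rw [eq_X_add_C_of_natDegree_le_one (Nat.le_of_lt_succ hp)]
  generalize p.coeff 1 = α, p.coeff 0 = β
  rcases eq_or_ne α 1 with rfl | hα
  · rcases eq_or_ne β 0 with rfl | hβ
    · exact .of_forall_pow_mem_eq_zero fun _ =>
        eq_zero_of_forall_pow_mem_eDerivImage_of_iterate_eq_X one_pos (by simp)
    · rw [C_1, one_mul, eDerivImage_X_add_C hβ]
      exact .of_mul_mem fun _ _ _ => Submodule.mem_top
  obtain ⟨c, hc⟩ : ∃ c, C α * X + C β = C α * (X - C c) + C c := by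
    refine ⟨β / (1 - α), ?_⟩
    have : (1 - α) * (β / (1 - α)) = β := mul_div_cancel₀ _ (sub_ne_zero.2 hα.symm)
    conv_lhs => rw [← this]
    simp only [map_mul, map_sub, map_one]
    ring
  rw [hc]
  by_cases hroot : ∃ r, 0 < r ∧ α ^ r = 1
  · obtain ⟨r, hr, hαr⟩ := hroot
    exact .of_forall_pow_mem_eq_zero fun _ =>
      eq_zero_of_forall_pow_mem_eDerivImage_of_iterate_eq_X hr (by simp [iterate_comp_affine, hαr])
  · push Not at hroot
    refine .of_mul_mem fun f g hf => ?_
    rw [mem_eDerivImage_affine_iff hroot] at hf ⊢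
    simp [hf]

end Mathieu

theorem image_of_E_derivation_is_MS {K : Type*} [Field K] [CharZero K]
    (φ : Polynomial K →ₐ[K] Polynomial K) :
    IsMathieuSubspace (LinearMap.range
      ((LinearMap.id : Polynomial K →ₗ[K] Polynomial K) - φ.toLinearMap)) := by
  rw [show φ = aeval (φ X) from algHom_ext (aeval_X _).symm]
  exact isMathieuSubspace_eDerivImage (φ X)
end

section
/- Let K be a field of characteristic zero, a(x) ∈ K[x], and D = a(x)·d/dx the K-derivation of K[x] given by multiplying the usual derivative by a(x). Then the image of D is exactly the ideal a(x)K[x]; in particular, the image of every K-derivation of K[x] is a Mathieu subspace of K[x]. -/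
open Polynomial

lemma derivative_surj {K : Type*} [Field K] [CharZero K] :
    Function.Surjective (derivative : Polynomial K → Polynomial K) := by
  intro p
  induction p using Polynomial.induction_on' with
  | add p q hp hq =>
    obtain ⟨u, hu⟩ := hp
    obtain ⟨v, hv⟩ := hq
    exact ⟨u + v, by simp [hu, hv]⟩
  | monomial n c =>
    refine ⟨monomial (n + 1) (c / (n + 1)), ?_⟩
    have hn : ((n : K) + 1) ≠ 0 := Nat.cast_add_one_ne_zero n
    rw [derivative_monomial]
    congr 1
    push_cast
    rw [div_mul_cancel₀ _ hn]

lemma range_mul_deriv {K : Type*} [Field K] [CharZero K] (a : Polynomial K) :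
    LinearMap.range ((LinearMap.mulLeft K a).comp
        (derivative : Polynomial K →ₗ[K] Polynomial K)) =
      Submodule.restrictScalars K (Ideal.span {a}) := by
  ext x
  simp only [LinearMap.mem_range, LinearMap.coe_comp, Function.comp_apply,
    LinearMap.mulLeft_apply, Submodule.restrictScalars_mem, Ideal.mem_span_singleton']
  constructor
  · rintro ⟨p, hp⟩
    exact ⟨derivative p, by rw [mul_comm]; exact hp⟩
  · rintro ⟨q, hq⟩
    obtain ⟨p, hp⟩ := derivative_surj (K := K) q
    exact ⟨p, by rw [hp, mul_comm]; exact hq⟩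

theorem image_of_derivation {K : Type*} [Field K] [CharZero K] (a : Polynomial K) :
    LinearMap.range ((LinearMap.mulLeft K a).comp
        (derivative : Polynomial K →ₗ[K] Polynomial K)) =
      Submodule.restrictScalars K (Ideal.span {a}) ∧
    ∀ D : Derivation K (Polynomial K) (Polynomial K),
      IsMathieuSubspace (LinearMap.range D.toLinearMap) := by
  refine ⟨range_mul_deriv a, fun D => ?_⟩
  have hD : D.toLinearMap = (LinearMap.mulLeft K (D X)).comp
      (derivative : Polynomial K →ₗ[K] Polynomial K) := by
    refine LinearMap.ext fun f => ?_
    have h2 : D f = derivative f * D X := by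
      conv_lhs => rw [show D = Polynomial.mkDerivation K (D X) from
        Polynomial.derivation_ext (Polynomial.mkDerivation_X K (D X)).symm]
      rw [Polynomial.mkDerivation_apply, smul_eq_mul]
    simp [h2, mul_comm]
  rw [hD, range_mul_deriv]
  intro p b hp
  refine ⟨1, fun m hm => ?_⟩
  exact Ideal.mul_mem_right b _ (hp m hm)
end

section
/- Let K be a field of characteristic zero, c ∈ K, n ≥ 0 an integer, and I = (x - c)^n K[x]. Then the image ∂(I) of I under the derivative ∂ = d/dx equals K[x] if n ≤ 1, and equals (x - c)^{n-1} K[x] if n ≥ 2; in particular ∂(I) is an ideal of K[x]. -/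
open Polynomial

lemma span_pow_aux {K : Type*} [Field K] (c : K) (n : ℕ) :
    Submodule.restrictScalars K (Ideal.span {(X - C c) ^ n}) =
    Submodule.span K (Set.range fun k : ℕ => (X - C c) ^ (n + k)) := by
  apply le_antisymm
  · intro p hp
    rw [Submodule.restrictScalars_mem, Ideal.mem_span_singleton] at hp
    obtain ⟨g, rfl⟩ := hp
    rw [← sum_taylor_eq g c, Polynomial.sum, Finset.mul_sum]
    apply Submodule.sum_mem
    intro i _
    have : (X - C c) ^ n * (C ((taylor c g).coeff i) * (X - C c) ^ i)
        = ((taylor c g).coeff i) • (X - C c) ^ (n + i) := by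
      rw [smul_eq_C_mul, pow_add]; ring
    rw [this]
    exact Submodule.smul_mem _ _ (Submodule.subset_span ⟨i, rfl⟩)
  · rw [Submodule.span_le]
    rintro _ ⟨k, rfl⟩
    rw [SetLike.mem_coe, Submodule.restrictScalars_mem, Ideal.mem_span_singleton]
    exact ⟨(X - C c) ^ k, pow_add _ _ _⟩

theorem image_of_power_ideal_under_derivative {K : Type*} [Field K] [CharZero K]
    (c : K) (n : ℕ) :
    (n ≤ 1 →
      Submodule.map (derivative : Polynomial K →ₗ[K] Polynomial K)
        (Submodule.restrictScalars K (Ideal.span {(X - C c) ^ n})) = ⊤) ∧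
    (2 ≤ n →
      Submodule.map (derivative : Polynomial K →ₗ[K] Polynomial K)
        (Submodule.restrictScalars K (Ideal.span {(X - C c) ^ n})) =
      Submodule.restrictScalars K (Ideal.span {(X - C c) ^ (n - 1)})) := by
  constructor
  · intro hn
    have h1 : Submodule.span K (Set.range fun k : ℕ => (X - C c) ^ (0 + k)) = ⊤ := by
      rw [← span_pow_aux c 0, pow_zero, Ideal.span_singleton_one]
      rfl
    rw [eq_top_iff, ← h1, Submodule.span_le]
    rintro _ ⟨k, rfl⟩
    have hk : ((k : K) + 1) ≠ 0 := by
      exact_mod_cast (Nat.cast_add_one_ne_zero k : ((k : ℕ) : K) + 1 ≠ 0)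
    refine ⟨C ((k : K) + 1)⁻¹ * (X - C c) ^ (k + 1), ?_, ?_⟩
    · rw [SetLike.mem_coe, Submodule.restrictScalars_mem, Ideal.mem_span_singleton]
      exact Dvd.dvd.mul_left (pow_dvd_pow _ (hn.trans (Nat.le_add_left 1 k))) _
    · rw [LinearMap.coe_mk] -- maybe not needed
      show derivative _ = _
      rw [derivative_mul, derivative_C, zero_mul, zero_add, derivative_X_sub_C_pow]
      push_cast
      rw [← mul_assoc, ← C_mul, inv_mul_cancel₀ hk, C_1, one_mul, zero_add]
  · intro hn
    rw [span_pow_aux c n, span_pow_aux c (n - 1), Submodule.map_span]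
    apply le_antisymm
    · rw [Submodule.span_le]
      rintro _ ⟨_, ⟨k, rfl⟩, rfl⟩
      show (derivative ((X - C c) ^ (n + k)) : K[X]) ∈ _
      rw [derivative_X_sub_C_pow]
      have he : n + k - 1 = (n - 1) + k := by omega
      rw [he, ← smul_eq_C_mul]
      exact Submodule.smul_mem _ _ (Submodule.subset_span ⟨k, rfl⟩)
    · rw [Submodule.span_le]
      rintro _ ⟨k, rfl⟩
      have hk : ((n + k : ℕ) : K) ≠ 0 := Nat.cast_ne_zero.mpr (by omega)
      have : (X - C c) ^ (n - 1 + k)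
          = ((n + k : ℕ) : K)⁻¹ • derivative ((X - C c) ^ (n + k)) := by
        rw [derivative_X_sub_C_pow, smul_eq_C_mul, ← mul_assoc, ← C_mul,
          inv_mul_cancel₀ hk, C_1, one_mul]
        congr 1
        omega
      show (X - C c) ^ (n - 1 + k) ∈ _
      rw [this]
      exact Submodule.smul_mem _ _
        (Submodule.subset_span ⟨_, ⟨k, rfl⟩, rfl⟩)
end

section
/- Let K be a field of characteristic zero, D the K-derivation of K[x] given by D(f) = x·f', and I = (x^2 - 1)K[x]. Then the image D(I) of I under D is not a Mathieu subspace of K[x]. More precisely, (x^2)^m ∈ D(I) for all m ≥ 1 but (x^2)^m · x ∉ D(I) for all m ≥ 1. -/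
open Polynomial

section Aux
variable {K : Type*} [Field K] [CharZero K]

set_option linter.unusedSectionVars false in
lemma LF_mem_iff (g : Polynomial K) :
    g ∈ Submodule.map
        ((LinearMap.mulLeft K (X : Polynomial K)).comp
          (derivative : Polynomial K →ₗ[K] Polynomial K))
        (Submodule.restrictScalars K (Ideal.span {(X : Polynomial K) ^ 2 - 1})) ↔
    ∃ p : Polynomial K, ((X : Polynomial K) ^ 2 - 1) ∣ p ∧ X * derivative p = g := by
  simp [Submodule.mem_map, Ideal.mem_span_singleton, LinearMap.mulLeft_apply]

lemma LF_pos (m : ℕ) (hm : 1 ≤ m) :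
    ((X : Polynomial K) ^ 2) ^ m ∈ Submodule.map
        ((LinearMap.mulLeft K (X : Polynomial K)).comp
          (derivative : Polynomial K →ₗ[K] Polynomial K))
        (Submodule.restrictScalars K (Ideal.span {(X : Polynomial K) ^ 2 - 1})) := by
  have hne : (2 * m : K) ≠ 0 := by
    have : (m : K) ≠ 0 := Nat.cast_ne_zero.2 (by omega)
    exact mul_ne_zero two_ne_zero this
  rw [LF_mem_iff]
  refine ⟨C ((2 * m : K))⁻¹ * (X ^ (2 * m) - 1), ?_, ?_⟩
  · have h : ((X : Polynomial K) ^ 2 - 1) ∣ (X ^ 2) ^ m - 1 ^ m := sub_dvd_pow_sub_pow _ _ m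
    simpa [← pow_mul] using h.mul_left (C ((2 * m : K))⁻¹)
  · rw [derivative_mul, derivative_C, zero_mul, zero_add, derivative_sub,
      derivative_one, sub_zero, derivative_X_pow, ← pow_mul]
    rw [show ((2 * m : ℕ) : K) = (2 * m : K) by push_cast; ring]
    generalize hga : (2 * m : K) = a at hne
    rw [show (X : Polynomial K) * (C a⁻¹ * (C a * X ^ (2 * m - 1)))
        = (C a⁻¹ * C a) * (X ^ (2 * m - 1) * X) from by ring,
      ← C_mul, inv_mul_cancel₀ hne, C_1, one_mul, ← pow_succ]
    congr 1; omega

lemma LF_neg (m : ℕ) (hm : 1 ≤ m) :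
    ((X : Polynomial K) ^ 2) ^ m * X ∉ Submodule.map
        ((LinearMap.mulLeft K (X : Polynomial K)).comp
          (derivative : Polynomial K →ₗ[K] Polynomial K))
        (Submodule.restrictScalars K (Ideal.span {(X : Polynomial K) ^ 2 - 1})) := by
  rw [LF_mem_iff]
  rintro ⟨p, hdvd, heq⟩
  have hne : ((2 * m + 1 : ℕ) : K) ≠ 0 := Nat.cast_ne_zero.2 (by omega)
  -- derivative p = X ^ (2 * m)
  have hX : (X : Polynomial K) ≠ 0 := X_ne_zero
  have hdp : derivative p = X ^ (2 * m) := by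
    have : (X : Polynomial K) * derivative p = X * X ^ (2 * m) := by
      rw [heq, ← pow_mul]; ring
    exact mul_left_cancel₀ hX this
  set q : Polynomial K := p - C ((2 * m + 1 : ℕ) : K)⁻¹ * X ^ (2 * m + 1) with hq
  have hdq : derivative q = 0 := by
    rw [hq, derivative_sub, hdp, derivative_mul, derivative_C, zero_mul, zero_add,
      derivative_X_pow]
    rw [show (2 * m + 1 - 1) = 2 * m by omega, ← mul_assoc, ← C_mul,
      inv_mul_cancel₀ hne, C_1, one_mul, sub_self]
  have hc := eq_C_of_derivative_eq_zero hdq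
  have e1 : Polynomial.eval (1 : K) p = 0 := by
    obtain ⟨h, rfl⟩ := hdvd; simp
  have e2 : Polynomial.eval (-1 : K) p = 0 := by
    obtain ⟨h, rfl⟩ := hdvd; simp
  have h12 : Polynomial.eval (1 : K) q = Polynomial.eval (-1 : K) q := by
    rw [hc]; simp
  rw [hq] at h12
  simp only [eval_sub, eval_mul, eval_C, eval_pow, eval_X, e1, e2, one_pow, mul_one] at h12
  rw [show ((-1 : K)) ^ (2 * m + 1) = -1 from Odd.neg_one_pow ⟨m, rfl⟩] at h12
  have : ((2 * m + 1 : ℕ) : K)⁻¹ = 0 := by linear_combination (-1/2 : K) * h12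
  exact hne (by simpa using inv_eq_zero.mp this)

end Aux

theorem LF_derivation_counterexample {K : Type*} [Field K] [CharZero K] :
    ¬ IsMathieuSubspace (Submodule.map
        ((LinearMap.mulLeft K (X : Polynomial K)).comp
          (derivative : Polynomial K →ₗ[K] Polynomial K))
        (Submodule.restrictScalars K (Ideal.span {(X : Polynomial K) ^ 2 - 1}))) ∧
    (∀ m : ℕ, 1 ≤ m →
      ((X : Polynomial K) ^ 2) ^ m ∈ Submodule.map
        ((LinearMap.mulLeft K (X : Polynomial K)).comp
          (derivative : Polynomial K →ₗ[K] Polynomial K))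
        (Submodule.restrictScalars K (Ideal.span {(X : Polynomial K) ^ 2 - 1}))) ∧
    (∀ m : ℕ, 1 ≤ m →
      ((X : Polynomial K) ^ 2) ^ m * X ∉ Submodule.map
        ((LinearMap.mulLeft K (X : Polynomial K)).comp
          (derivative : Polynomial K →ₗ[K] Polynomial K))
        (Submodule.restrictScalars K (Ideal.span {(X : Polynomial K) ^ 2 - 1}))) := by
  refine ⟨?_, LF_pos, LF_neg⟩
  intro hMS
  obtain ⟨N, hN⟩ := hMS (X ^ 2) X LF_pos
  exact LF_neg (N + 1) (by omega) (hN (N + 1) (by omega))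
end

section
/- Let K be a field (of arbitrary characteristic), q ∈ K a root of unity (q^r = 1 for some r ≥ 1), φ the K-algebra endomorphism of K[x] mapping x to qx, and δ = I - φ. Then the radical of the image of δ is {0}; in particular Im δ is a Mathieu subspace of K[x]. -/
open Polynomial

lemma coeff_aeval_qx {K : Type*} [Field K] (q : K) (f : Polynomial K) (n : ℕ) :
    ((aeval (C q * X)) f).coeff n = q ^ n * f.coeff n := by
  induction f using Polynomial.induction_on' with
  | add p r hp hr => simp [map_add, coeff_add, hp, hr, mul_add]
  | monomial k c =>
    simp only [aeval_monomial, algebraMap_eq, mul_pow, ← C_pow, ← mul_assoc, ← C_mul,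
      coeff_C_mul, coeff_X_pow, coeff_monomial]
    by_cases h : n = k
    · simp [h, mul_comm]
    · simp [h, Ne.symm h]

lemma mem_range_coeff {K : Type*} [Field K] (q : K) (f : Polynomial K)
    (hf : f ∈ LinearMap.range ((LinearMap.id : Polynomial K →ₗ[K] Polynomial K) -
      (aeval (C q * X)).toLinearMap)) (n : ℕ) (hn : q ^ n = 1) : f.coeff n = 0 := by
  obtain ⟨g, rfl⟩ := hf
  simp [coeff_aeval_qx, hn]

/-- The radical of a subset `V`: all elements whose high enough powers all lie in `V`. -/
def msRadical {K : Type*} [Field K] (V : Set (Polynomial K)) : Set (Polynomial K) :=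
  {a : Polynomial K | ∃ N : ℕ, ∀ m : ℕ, N ≤ m → a ^ m ∈ V}

theorem image_qx_root_of_unity {K : Type*} [Field K] (q : K)
    (hroot : ∃ r : ℕ, 1 ≤ r ∧ q ^ r = 1) :
    msRadical ((LinearMap.range ((LinearMap.id : Polynomial K →ₗ[K] Polynomial K) -
        (aeval (C q * X)).toLinearMap) : Submodule K (Polynomial K)) : Set (Polynomial K))
      = {0} ∧
    IsMathieuSubspace (LinearMap.range
      ((LinearMap.id : Polynomial K →ₗ[K] Polynomial K) - (aeval (C q * X)).toLinearMap)) := by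
  obtain ⟨r, hr1, hrq⟩ := hroot
  have key : msRadical ((LinearMap.range ((LinearMap.id : Polynomial K →ₗ[K] Polynomial K) -
        (aeval (C q * X)).toLinearMap) : Submodule K (Polynomial K)) : Set (Polynomial K))
      = {0} := by
    ext a
    simp only [Set.mem_singleton_iff]
    constructor
    · rintro ⟨N, hN⟩
      by_contra ha
      set m := r * (N + 1) with hm
      have hmN : N ≤ m := le_trans (Nat.le_succ N) (Nat.le_mul_of_pos_left _ hr1)
      have hqm : q ^ (m * a.natDegree) = 1 := by
        rw [hm, mul_assoc, pow_mul, hrq, one_pow]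
      have hcoeff := mem_range_coeff q (a ^ m) (hN m hmN) (m * a.natDegree) hqm
      have hdeg : (a ^ m).natDegree = m * a.natDegree := natDegree_pow a m
      have hlead : (a ^ m).coeff (m * a.natDegree) = a.leadingCoeff ^ m := by
        rw [← hdeg, ← leadingCoeff, leadingCoeff_pow]
      rw [hlead] at hcoeff
      exact pow_ne_zero m (leadingCoeff_ne_zero.mpr ha) hcoeff
    · rintro rfl
      exact ⟨1, fun m hm => by simp [zero_pow (Nat.one_le_iff_ne_zero.mp hm), Submodule.zero_mem]⟩
  refine ⟨key, fun a b h => ?_⟩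
  have ha : a = 0 := by
    have : a ∈ msRadical ((LinearMap.range ((LinearMap.id : Polynomial K →ₗ[K] Polynomial K) -
        (aeval (C q * X)).toLinearMap) : Submodule K (Polynomial K)) : Set (Polynomial K)) :=
      ⟨1, fun m hm => h m hm⟩
    simpa [key] using this
  exact ⟨1, fun m hm => by
    simp [ha, zero_pow (Nat.one_le_iff_ne_zero.mp hm), Submodule.zero_mem]⟩
end

section
/- Let K be a field (of arbitrary characteristic) and let S be an infinite set of positive integers whose complement in the positive integers is infinite (equivalently, listing S as a strictly increasing sequence n_1 < n_2 < ..., one has n_{i+1} - n_i ≠ 1 for infinitely many i). Let V be the K-subspace of K[x] spanned by the monomials x^n with n ∈ S. Then the following are equivalent: (1) the radical r(V) = {0}; (2) V is a Mathieu subspace of K[x]; (3) there exists no integer d ≥ 1 such that md ∈ S for all m ≥ 1. -/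
open Polynomial

lemma mem_span_monomials_iff {K : Type*} [Field K] (S : Set ℕ) (p : Polynomial K) :
    p ∈ Submodule.span K ((fun n => (X : Polynomial K) ^ n) '' S) ↔
      ∀ n, n ∉ S → p.coeff n = 0 := by
  constructor
  · intro hp n hn
    induction hp using Submodule.span_induction with
    | mem q hq =>
      obtain ⟨k, hk, rfl⟩ := hq
      simp only [coeff_X_pow, ite_eq_right_iff]
      rintro rfl
      exact absurd hk hn
    | zero => simp
    | add x y _ _ hx hy => simp [coeff_add, hx, hy]
    | smul c x _ hx => simp [coeff_smul, hx]
  · intro h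
    rw [p.as_sum_support]
    apply Submodule.sum_mem
    intro i hi
    have hiS : i ∈ S := by
      by_contra h'
      exact (Polynomial.mem_support_iff.mp hi) (h i h')
    have hmono : (monomial i (p.coeff i) : Polynomial K) = p.coeff i • X ^ i := by
      rw [smul_eq_C_mul, C_mul_X_pow_eq_monomial]
    rw [hmono]
    exact Submodule.smul_mem _ _ (Submodule.subset_span ⟨i, hiS, rfl⟩)

theorem monomial_span_MS_tfae {K : Type*} [Field K] (S : Set ℕ)
    (hpos : ∀ n ∈ S, 1 ≤ n) (hinf : S.Infinite)
    (hcoinf : ({n : ℕ | 1 ≤ n} \ S).Infinite) :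
    (msRadical ((Submodule.span K ((fun n => (X : Polynomial K) ^ n) '' S) :
          Submodule K (Polynomial K)) : Set (Polynomial K)) = {0} ↔
      IsMathieuSubspace (Submodule.span K ((fun n => (X : Polynomial K) ^ n) '' S))) ∧
    (IsMathieuSubspace (Submodule.span K ((fun n => (X : Polynomial K) ^ n) '' S)) ↔
      ¬ ∃ d : ℕ, 1 ≤ d ∧ ∀ m : ℕ, 1 ≤ m → m * d ∈ S) := by
  set V := Submodule.span K ((fun n => (X : Polynomial K) ^ n) '' S) with hVdef
  have memV : ∀ p : Polynomial K, p ∈ V ↔ ∀ n, n ∉ S → p.coeff n = 0 :=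
    fun p => mem_span_monomials_iff S p
  -- (3) ⟹ (1)
  have h31 : (¬ ∃ d : ℕ, 1 ≤ d ∧ ∀ m : ℕ, 1 ≤ m → m * d ∈ S) →
      msRadical (V : Set (Polynomial K)) = {0} := by
    intro h3
    ext a
    simp only [Set.mem_singleton_iff, msRadical, Set.mem_setOf_eq, SetLike.mem_coe]
    constructor
    · rintro ⟨N, hN⟩
      by_contra ha
      set d := a.natDegree with hd
      -- for all m ≥ max N 1, m * d ∈ S
      have key : ∀ m : ℕ, max N 1 ≤ m → m * d ∈ S := by
        intro m hm
        have hmem : a ^ m ∈ V := hN m (le_trans (le_max_left _ _) hm)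
        by_contra hnS
        have hc := (memV _).mp hmem (m * d) hnS
        have hdeg : (a ^ m).natDegree = m * d := by
          rw [natDegree_pow]
        have hlc : (a ^ m).coeff (m * d) = a.leadingCoeff ^ m := by
          rw [← hdeg, coeff_natDegree, leadingCoeff_pow]
        rw [hlc] at hc
        exact pow_ne_zero m (leadingCoeff_ne_zero.mpr ha) hc
      have hd1 : 1 ≤ d := by
        by_contra hd0
        push_neg at hd0
        interval_cases d
        have := hpos 0 (by simpa using key (max N 1) le_rfl)
        omega
      apply h3
      refine ⟨max N 1 * d, Nat.mul_pos (le_max_right N 1) hd1, fun m hm => ?_⟩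
      have : m * (max N 1 * d) = (m * max N 1) * d := by ring
      rw [this]
      exact key (m * max N 1) (Nat.le_mul_of_pos_left _ (by omega))
    · rintro rfl
      exact ⟨1, fun m hm => by
        rw [zero_pow (by omega : m ≠ 0)]; exact V.zero_mem⟩
  -- (1) ⟹ (2)
  have h12 : msRadical (V : Set (Polynomial K)) = {0} → IsMathieuSubspace V := by
    intro h1 a b ha
    have haV : a ∈ msRadical (V : Set (Polynomial K)) := ⟨1, fun m hm => ha m hm⟩
    rw [h1] at haV
    refine ⟨1, fun m hm => ?_⟩
    rw [Set.mem_singleton_iff.mp haV, zero_pow (by omega : m ≠ 0), zero_mul]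
    exact V.zero_mem
  -- (2) ⟹ (3)
  have h23 : IsMathieuSubspace V → ¬ ∃ d : ℕ, 1 ≤ d ∧ ∀ m : ℕ, 1 ≤ m → m * d ∈ S := by
    rintro hMS ⟨d, hd, hdS⟩
    set b : Polynomial K := ∑ e ∈ Finset.Ico 1 d, X ^ e with hbdef
    obtain ⟨N, hN⟩ := hMS (X ^ d) b (by
      intro m hm
      rw [← pow_mul, mul_comm]
      exact Submodule.subset_span ⟨m * d, hdS m hm, rfl⟩)
    -- pick a large element of the coinfinite complement
    obtain ⟨n, hnT, hngt⟩ := hcoinf.exists_gt ((N + 1) * d)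
    obtain ⟨hn1, hnS⟩ := hnT
    obtain ⟨m, e, hed, hne⟩ : ∃ m e : ℕ, e < d ∧ n = m * d + e :=
      ⟨n / d, n % d, Nat.mod_lt _ hd, (Nat.div_add_mod' n d).symm⟩
    have hdle : d ≤ (N + 1) * d := Nat.le_mul_of_pos_left d (by omega)
    have he1 : 1 ≤ e := by
      by_contra h0
      push_neg at h0
      have he0 : e = 0 := by omega
      have hm1 : 1 ≤ m := by
        by_contra hm0
        push_neg at hm0
        have hm0' : m = 0 := by omega
        rw [hm0', he0, zero_mul, add_zero] at hne
        omega
      exact hnS (by rw [hne, he0, add_zero]; exact hdS m hm1)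
    have hmN : N ≤ m := by
      by_contra hc
      push_neg at hc
      have h1 : n < (m + 1) * d := by
        have h : (m + 1) * d = m * d + d := by ring
        omega
      have h2 : (m + 1) * d ≤ (N + 1) * d := Nat.mul_le_mul_right d (by omega)
      omega
    have hmem : ((X : Polynomial K) ^ d) ^ m * b ∈ V := hN m hmN
    have hcoeff : (((X : Polynomial K) ^ d) ^ m * b).coeff n = 1 := by
      have hexp : ((X : Polynomial K) ^ d) ^ m * b =
          ∑ e' ∈ Finset.Ico 1 d, X ^ (m * d + e') := by
        rw [hbdef, Finset.mul_sum]
        refine Finset.sum_congr rfl fun e' _ => ?_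
        rw [← pow_mul, ← pow_add, mul_comm d m]
      rw [hexp, finset_sum_coeff]
      rw [Finset.sum_eq_single_of_mem e (Finset.mem_Ico.mpr ⟨he1, hed⟩)]
      · rw [coeff_X_pow, if_pos hne]
      · intro e' _ hne'
        rw [coeff_X_pow, if_neg (by omega)]
    have := (memV _).mp hmem n hnS
    rw [hcoeff] at this
    exact one_ne_zero this
  exact ⟨⟨h12, fun h2 => h31 (h23 h2)⟩, h23, fun h3 => h12 (h31 h3)⟩
end

section
/- Let K be a field (of arbitrary characteristic) and V a homogeneous K-subspace of K[x] (i.e., V is spanned by a set of monomials x^n). Then V is a Mathieu subspace of K[x] if and only if one of the following holds: (1) V = K[x]; (2) V is finite dimensional over K and 1 ∉ V; (3) 1 ∉ V and there exists N ≥ 1 with x^N K[x] ⊆ V; (4) V is spanned by the monomials x^n with n in an infinite set S of positive integers such that there exists no integer d ≥ 1 with md ∈ S for all m ≥ 1. -/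
/-!
A homogeneous subspace is `span {X ^ n | n ∈ T}`, and a polynomial lies in it iff its support
lies in `T`. If `a ≠ 0` has all its powers in `V`, then all leading exponents `m * deg a` lie in
`T`. So when `0 ∉ T` and `T` contains no progression `{m * d | m ≥ 1}`, only `a = 0` qualifies and
`V` is Mathieu for trivial reasons. When `T` does contain such a progression, the Mathieu property
for `a = X ^ d`, `b = X ^ j` puts almost all of every residue class mod `d`, hence all large `n`,
into `T`, i.e. `X ^ N K[X] ⊆ V`. Conversely, if `X ^ N K[X] ⊆ V` and `1 ∉ V`, then `X` divides
every element of `V`, so `a ^ m * b ∈ X ^ N K[X]` for `m ≥ N`.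
-/

open Polynomial

open Filter Submodule

theorem Set.infinite_of_forall_mul_mem {S : Set ℕ} {d : ℕ} (hd : 0 < d)
    (hS : ∀ m : ℕ, 1 ≤ m → m * d ∈ S) : S.Infinite :=
  Set.infinite_of_injective_forall_mem (f := fun m => (m + 1) * d)
    (fun _ _ h => by simpa using Nat.eq_of_mul_eq_mul_right hd h) (fun m => hS (m + 1) (by omega))

theorem Nat.eventually_of_forall_lt_eventually_mul_add {P : ℕ → Prop} {d : ℕ} (hd : 0 < d)
    (hP : ∀ j < d, ∀ᶠ m in atTop, P (m * d + j)) : ∀ᶠ n in atTop, P n := by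
  have hall : ∀ᶠ m in atTop, ∀ j : Fin d, P (m * d + j) :=
    eventually_all.2 fun j => hP j j.isLt
  obtain ⟨M, hM⟩ := eventually_atTop.1 hall
  refine eventually_atTop.2 ⟨M * d, fun n hn => ?_⟩
  have hquot : M ≤ n / d := (Nat.le_div_iff_mul_le hd).2 hn
  simpa [Nat.div_add_mod'] using hM (n / d) hquot ⟨n % d, Nat.mod_lt n hd⟩

namespace Polynomial

section Semiring

variable {R : Type*} [Semiring R] {T : Set ℕ}

theorem coe_basisMonomials_eq_X_pow : ⇑(basisMonomials R) = fun n => (X : R[X]) ^ n := by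
  funext n
  exact congrFun (coe_basisMonomials R) n ▸ monomial_one_right_eq_X_pow n

theorem mem_span_X_pow_image_iff {p : R[X]} :
    p ∈ span R ((fun n => (X : R[X]) ^ n) '' T) ↔ ↑p.support ⊆ T := by
  rw [← coe_basisMonomials_eq_X_pow]
  exact (basisMonomials R).mem_span_image

theorem X_pow_mem_span_X_pow_image_iff [Nontrivial R] {n : ℕ} :
    (X : R[X]) ^ n ∈ span R ((fun n => (X : R[X]) ^ n) '' T) ↔ n ∈ T := by
  simpa only [coe_basisMonomials_eq_X_pow] using (basisMonomials R).self_mem_span_image (i := n)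

theorem one_mem_span_X_pow_image_iff [Nontrivial R] :
    (1 : R[X]) ∈ span R ((fun n => (X : R[X]) ^ n) '' T) ↔ 0 ∈ T := by
  simpa using X_pow_mem_span_X_pow_image_iff (T := T) (n := 0)

theorem restrictScalars_span_X_pow_le_span_X_pow_image {N : ℕ} (hT : ∀ n, N ≤ n → n ∈ T) :
    (Ideal.span {(X : R[X]) ^ N}).restrictScalars R ≤ span R ((fun n => (X : R[X]) ^ n) '' T) := by
  intro q hq
  obtain ⟨r, rfl⟩ := Ideal.mem_span_singleton'.1 hq
  refine mem_span_X_pow_image_iff.2 fun n hn => hT n ?_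
  by_contra hlt
  exact mem_support_iff.1 hn (by rw [coeff_mul_X_pow', if_neg hlt])

theorem natDegree_mul_mem_of_pow_mem [NoZeroDivisors R] {a : R[X]} (ha0 : a ≠ 0)
    (ha : ∀ m : ℕ, 1 ≤ m → a ^ m ∈ span R ((fun n => (X : R[X]) ^ n) '' T)) :
    ∀ m : ℕ, 1 ≤ m → m * a.natDegree ∈ T := by
  intro m hm
  have hdeg := natDegree_mem_support_of_nonzero (pow_ne_zero m ha0)
  rw [natDegree_pow] at hdeg
  exact mem_span_X_pow_image_iff.1 (ha m hm) hdeg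

theorem eq_zero_of_pow_mem_span_X_pow_image [NoZeroDivisors R] (h0 : 0 ∉ T)
    (hT : ¬∃ d : ℕ, 1 ≤ d ∧ ∀ m : ℕ, 1 ≤ m → m * d ∈ T) {a : R[X]}
    (ha : ∀ m : ℕ, 1 ≤ m → a ^ m ∈ span R ((fun n => (X : R[X]) ^ n) '' T)) : a = 0 := by
  by_contra ha0
  have hmul := natDegree_mul_mem_of_pow_mem ha0 ha
  rcases Nat.eq_zero_or_pos a.natDegree with hdeg | hdeg
  · exact h0 (by simpa [hdeg] using hmul 1 le_rfl)
  · exact hT ⟨a.natDegree, hdeg, hmul⟩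

end Semiring

theorem finite_of_finiteDimensional_span_X_pow_image {K : Type*} [Field K] {T : Set ℕ}
    (hT : FiniteDimensional K (span K ((fun n => (X : K[X]) ^ n) '' T))) : T.Finite := by
  set V := span K ((fun n => (X : K[X]) ^ n) '' T)
  have hX := (basisMonomials K).linearIndependent.comp (Subtype.val : T → ℕ) Subtype.val_injective
  rw [coe_basisMonomials_eq_X_pow] at hX
  have hli : LinearIndependent K fun n : T => (⟨X ^ (n : ℕ), subset_span ⟨n, n.2, rfl⟩⟩ : V) :=
    .of_comp V.subtype hX
  exact Set.finite_coe_iff.mp hli.finite_of_isNoetherian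

end Polynomial

section Mathieu

variable {K : Type*} [Field K]

theorem isMathieuSubspace_top : IsMathieuSubspace (⊤ : Submodule K K[X]) :=
  fun _ _ _ => ⟨0, fun _ _ => mem_top⟩

theorem IsMathieuSubspace.eq_top_of_one_mem {V : Submodule K K[X]} (hV : IsMathieuSubspace V)
    (h1 : (1 : K[X]) ∈ V) : V = ⊤ := by
  refine eq_top_iff'.2 fun b => ?_
  obtain ⟨N, hN⟩ := hV 1 b fun m _ => by simpa using h1
  simpa using hN N le_rfl

theorem isMathieuSubspace_of_forall_pow_mem_eq_zero {V : Submodule K K[X]}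
    (hV : ∀ a : K[X], (∀ m : ℕ, 1 ≤ m → a ^ m ∈ V) → a = 0) : IsMathieuSubspace V := by
  intro a b ha
  refine ⟨1, fun m hm => ?_⟩
  rw [hV a ha, zero_pow (by omega), zero_mul]
  exact V.zero_mem

variable {T : Set ℕ}

theorem isMathieuSubspace_span_X_pow_image_of_ideal_le (h0 : 0 ∉ T) {N : ℕ}
    (hN : (Ideal.span {(X : K[X]) ^ N}).restrictScalars K ≤
      span K ((fun n => (X : K[X]) ^ n) '' T)) :
    IsMathieuSubspace (span K ((fun n => (X : K[X]) ^ n) '' T)) := by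
  intro a b ha
  have hcoeff : a.coeff 0 = 0 := by
    by_contra hc
    exact h0 (mem_span_X_pow_image_iff.1 (by simpa using ha 1 le_rfl) (mem_support_iff.2 hc))
  refine ⟨N, fun m hm => hN ?_⟩
  rw [restrictScalars_mem, Ideal.mem_span_singleton]
  exact dvd_mul_of_dvd_left ((pow_dvd_pow X hm).trans (pow_dvd_pow_of_dvd (X_dvd_iff.2 hcoeff) m)) b

theorem IsMathieuSubspace.eventually_mem_of_forall_mul_mem
    (hV : IsMathieuSubspace (span K ((fun n => (X : K[X]) ^ n) '' T))) {d : ℕ} (hd : 0 < d)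
    (hdT : ∀ m : ℕ, 1 ≤ m → m * d ∈ T) : ∀ᶠ n in atTop, n ∈ T := by
  refine Nat.eventually_of_forall_lt_eventually_mul_add hd fun j _ => ?_
  obtain ⟨N, hN⟩ := hV (X ^ d) (X ^ j) fun m hm => by
    rw [← pow_mul, X_pow_mem_span_X_pow_image_iff, mul_comm]
    exact hdT m hm
  refine eventually_atTop.2 ⟨N, fun m hm => ?_⟩
  rw [← X_pow_mem_span_X_pow_image_iff (R := K), pow_add, mul_comm m d, pow_mul]
  exact hN m hm

end Mathieu

theorem homogeneous_MS_classification {K : Type*} [Field K] (V : Submodule K (Polynomial K))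
    (hhom : ∃ T : Set ℕ, V = Submodule.span K ((fun n => (X : Polynomial K) ^ n) '' T)) :
    IsMathieuSubspace V ↔
      (V = ⊤) ∨
      (FiniteDimensional K V ∧ (1 : Polynomial K) ∉ V) ∨
      ((1 : Polynomial K) ∉ V ∧ ∃ N : ℕ, 1 ≤ N ∧
        Submodule.restrictScalars K (Ideal.span {(X : Polynomial K) ^ N}) ≤ V) ∨
      (∃ S : Set ℕ, S.Infinite ∧ (∀ n ∈ S, 1 ≤ n) ∧
        V = Submodule.span K ((fun n => (X : Polynomial K) ^ n) '' S) ∧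
        ¬ ∃ d : ℕ, 1 ≤ d ∧ ∀ m : ℕ, 1 ≤ m → m * d ∈ S) := by
  obtain ⟨T, rfl⟩ := hhom
  simp only [one_mem_span_X_pow_image_iff]
  constructor
  · intro hV
    by_cases h0 : 0 ∈ T
    · exact Or.inl (hV.eq_top_of_one_mem (one_mem_span_X_pow_image_iff.2 h0))
    by_cases hfin : T.Finite
    · exact Or.inr (Or.inl ⟨FiniteDimensional.span_of_finite K (hfin.image _), h0⟩)
    by_cases hmul : ∃ d : ℕ, 1 ≤ d ∧ ∀ m : ℕ, 1 ≤ m → m * d ∈ T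
    · obtain ⟨d, hd, hdT⟩ := hmul
      obtain ⟨N, hN⟩ := eventually_atTop.1 (hV.eventually_mem_of_forall_mul_mem hd hdT)
      exact Or.inr (Or.inr (Or.inl ⟨h0, N + 1, by omega,
        restrictScalars_span_X_pow_le_span_X_pow_image fun n hn => hN n (by omega)⟩))
    · exact Or.inr (Or.inr (Or.inr
        ⟨T, hfin, fun n hn => Nat.pos_of_ne_zero (ne_of_mem_of_not_mem hn h0), rfl, hmul⟩))
  · rintro (h | ⟨hfd, h0⟩ | ⟨h0, N, -, hN⟩ | ⟨S, -, hS, hVS, hmul⟩)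
    · exact h ▸ isMathieuSubspace_top
    · refine isMathieuSubspace_of_forall_pow_mem_eq_zero fun a =>
        eq_zero_of_pow_mem_span_X_pow_image h0 ?_
      rintro ⟨d, hd, hdT⟩
      exact Set.infinite_of_forall_mul_mem hd hdT
        (finite_of_finiteDimensional_span_X_pow_image hfd)
    · exact isMathieuSubspace_span_X_pow_image_of_ideal_le h0 hN
    · rw [hVS]
      refine isMathieuSubspace_of_forall_pow_mem_eq_zero fun a =>
        eq_zero_of_pow_mem_span_X_pow_image (fun h => ?_) hmul
      simpa using hS 0 h
end

section
/- Let K be a field (of arbitrary characteristic), q ∈ K nonzero and not a root of unity, φ the K-algebra endomorphism of K[x] mapping x to qx, δ = I - φ, and I the ideal of K[x] generated by x^2 - 1. Then δ(I) is not a Mathieu subspace of K[x]. More precisely, (x^2)^m ∈ δ(I) for all m ≥ 1 but (x^2)^m · x ∉ δ(I) for all m ≥ 1. -/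
open Polynomial

section Aux
variable {K : Type*} [Field K]

lemma coeff_aeval_CqX (q : K) (p : Polynomial K) (k : ℕ) :
    (aeval (C q * X) p).coeff k = q ^ k * p.coeff k := by
  induction p using Polynomial.induction_on' with
  | add f g hf hg => simp [hf, hg, mul_add]
  | monomial n a =>
    rw [aeval_monomial, mul_pow, ← C_pow, Polynomial.algebraMap_eq, ← mul_assoc, ← C_mul,
      coeff_C_mul, coeff_X_pow, coeff_monomial]
    by_cases h : k = n
    · subst h; simp [mul_comm]
    · simp [h, Ne.symm h]

lemma delta_ker (q : K) (hroot : ∀ r : ℕ, 1 ≤ r → q ^ r ≠ 1) (p : Polynomial K)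
    (h : p - aeval (C q * X) p = 0) (k : ℕ) (hk : 1 ≤ k) : p.coeff k = 0 := by
  have h2 := congrArg (fun u => Polynomial.coeff u k) h
  simp only [coeff_sub, coeff_aeval_CqX, coeff_zero] at h2
  have h3 : (1 - q ^ k) * p.coeff k = 0 := by linear_combination h2
  rcases mul_eq_zero.1 h3 with h4 | h4
  · exact absurd (by linear_combination -h4) (hroot k hk)
  · exact h4

end Aux

theorem LF_E_derivation_counterexample {K : Type*} [Field K] (q : K) (hq : q ≠ 0)
    (hroot : ∀ r : ℕ, 1 ≤ r → q ^ r ≠ 1) :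
    ¬ IsMathieuSubspace (Submodule.map
        ((LinearMap.id : Polynomial K →ₗ[K] Polynomial K) - (aeval (C q * X)).toLinearMap)
        (Submodule.restrictScalars K (Ideal.span {(X : Polynomial K) ^ 2 - 1}))) ∧
    (∀ m : ℕ, 1 ≤ m →
      ((X : Polynomial K) ^ 2) ^ m ∈ Submodule.map
        ((LinearMap.id : Polynomial K →ₗ[K] Polynomial K) - (aeval (C q * X)).toLinearMap)
        (Submodule.restrictScalars K (Ideal.span {(X : Polynomial K) ^ 2 - 1}))) ∧
    (∀ m : ℕ, 1 ≤ m →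
      ((X : Polynomial K) ^ 2) ^ m * X ∉ Submodule.map
        ((LinearMap.id : Polynomial K →ₗ[K] Polynomial K) - (aeval (C q * X)).toLinearMap)
        (Submodule.restrictScalars K (Ideal.span {(X : Polynomial K) ^ 2 - 1}))) := by
  have hdvd : ∀ m : ℕ, ((X : Polynomial K) ^ 2 - 1) ∣ ((X : Polynomial K) ^ 2) ^ m - 1 := by
    intro m
    simpa using sub_dvd_pow_sub_pow ((X : Polynomial K) ^ 2) 1 m
  -- part 2 : membership
  have hmem : ∀ m : ℕ, 1 ≤ m →
      ((X : Polynomial K) ^ 2) ^ m ∈ Submodule.map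
        ((LinearMap.id : Polynomial K →ₗ[K] Polynomial K) - (aeval (C q * X)).toLinearMap)
        (Submodule.restrictScalars K (Ideal.span {(X : Polynomial K) ^ 2 - 1})) := by
    intro m hm
    have hne' : (1 : K) - q ^ (2 * m) ≠ 0 :=
      sub_ne_zero_of_ne (hroot (2 * m) (by omega)).symm
    set c : K := (1 - q ^ (2 * m))⁻¹ with hc
    refine ⟨C c * (((X : Polynomial K) ^ 2) ^ m - 1),
      Submodule.restrictScalars_mem _ _ _ |>.2 (Ideal.mem_span_singleton.2 ((hdvd m).mul_left _)),
      ?_⟩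
    simp only [LinearMap.sub_apply, LinearMap.id_apply, AlgHom.toLinearMap_apply]
    have h1 : aeval (C q * X) (C c * (((X : Polynomial K) ^ 2) ^ m - 1))
        = C c * (C (q ^ (2 * m)) * X ^ (2 * m) - 1) := by
      rw [map_mul, map_sub, map_one, map_pow, map_pow, aeval_X, aeval_C,
        Polynomial.algebraMap_eq, ← pow_mul, mul_pow, ← C_pow]
    rw [h1, ← pow_mul]
    rw [show (C c * ((X : Polynomial K) ^ (2 * m) - 1)
          - C c * (C (q ^ (2 * m)) * X ^ (2 * m) - 1))
        = C (c * (1 - q ^ (2 * m))) * X ^ (2 * m) by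
      simp only [C_mul, C_sub, C_1]; ring]
    rw [hc, inv_mul_cancel₀ hne', C_1, one_mul]
  -- part 3 : non-membership
  have hnot : ∀ m : ℕ, 1 ≤ m →
      ((X : Polynomial K) ^ 2) ^ m * X ∉ Submodule.map
        ((LinearMap.id : Polynomial K →ₗ[K] Polynomial K) - (aeval (C q * X)).toLinearMap)
        (Submodule.restrictScalars K (Ideal.span {(X : Polynomial K) ^ 2 - 1})) := by
    intro m hm hmem'
    obtain ⟨g, hgI, hg⟩ := hmem'
    simp only [LinearMap.sub_apply, LinearMap.id_apply, AlgHom.toLinearMap_apply] at hg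
    have hgI' : ((X : Polynomial K) ^ 2 - 1) ∣ g :=
      Ideal.mem_span_singleton.1 ((Submodule.restrictScalars_mem _ _ _).1 hgI)
    have hne : (1 : K) - q ^ (2 * m + 1) ≠ 0 :=
      sub_ne_zero_of_ne (hroot (2 * m + 1) (by omega)).symm
    set c : K := (1 - q ^ (2 * m + 1))⁻¹ with hc
    have hc0 : c ≠ 0 := by rw [hc]; exact inv_ne_zero hne
    set p : Polynomial K := C c * X ^ (2 * m + 1) with hp
    have hδp : p - aeval (C q * X) p = ((X : Polynomial K) ^ 2) ^ m * X := by
      have h1 : aeval (C q * X) p = C c * (C (q ^ (2 * m + 1)) * X ^ (2 * m + 1)) := by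
        rw [hp, map_mul, map_pow, aeval_X, aeval_C, Polynomial.algebraMap_eq,
          mul_pow, ← C_pow]
      rw [h1, hp]
      rw [show (C c * X ^ (2 * m + 1)
            - C c * (C (q ^ (2 * m + 1)) * X ^ (2 * m + 1)) : Polynomial K)
          = C (c * (1 - q ^ (2 * m + 1))) * X ^ (2 * m + 1) by
        simp only [C_mul, C_sub, C_1]; ring]
      rw [hc, inv_mul_cancel₀ hne, C_1, one_mul, pow_succ, pow_mul]
    have hker : (g - p) - aeval (C q * X) (g - p) = 0 := by
      rw [map_sub]
      have : (g - p) - (aeval (C q * X) g - aeval (C q * X) p)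
          = (g - aeval (C q * X) g) - (p - aeval (C q * X) p) := by ring
      rw [this, hg, hδp, sub_self]
    have hcoeff : ∀ k : ℕ, 1 ≤ k → (g - p).coeff k = 0 := delta_ker q hroot _ hker
    set d : K := (g - p).coeff 0 with hd
    have hgeq : g = p + C d := by
      ext k
      rcases Nat.eq_zero_or_pos k with hk | hk
      · subst hk; simp [hd, hp]
      · have h := hcoeff k hk
        simp only [coeff_sub, sub_eq_zero] at h
        simp [coeff_C, Nat.one_le_iff_ne_zero.mp hk, h]
    have hdvd2 : ((X : Polynomial K) ^ 2 - 1) ∣ C c * ((X : Polynomial K) ^ (2 * m + 1) - X) := by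
      have h2 : (X : Polynomial K) ^ (2 * m + 1) - X
          = X * (((X : Polynomial K) ^ 2) ^ m - 1) := by
        rw [pow_succ, pow_mul]; ring
      rw [h2]
      exact ((hdvd m).mul_left X).mul_left (C c)
    have hdvd3 : ((X : Polynomial K) ^ 2 - 1) ∣ C c * X + C d := by
      have h3 : (C c * X + C d : Polynomial K)
          = g - C c * ((X : Polynomial K) ^ (2 * m + 1) - X) := by
        rw [hgeq, hp]; ring
      rw [h3]
      exact dvd_sub hgI' hdvd2
    have hne0 : (C c * X + C d : Polynomial K) ≠ 0 := by
      intro h0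
      have h4 := congrArg (fun u => Polynomial.coeff u 1) h0
      simp [coeff_C] at h4
      exact hc0 h4
    have hdeg := Polynomial.natDegree_le_of_dvd hdvd3 hne0
    have hdeg2 : ((X : Polynomial K) ^ 2 - 1).natDegree = 2 := by
      simpa using Polynomial.natDegree_X_pow_sub_C (n := 2) (r := (1 : K))
    have hdeg1 : (C c * X + C d : Polynomial K).natDegree ≤ 1 := by
      refine le_trans (Polynomial.natDegree_add_le _ _) (max_le ?_ ?_)
      · exact le_trans (Polynomial.natDegree_C_mul_le _ _) (by simp)
      · simp
    omega
  refine ⟨?_, hmem, hnot⟩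
  intro hMS
  obtain ⟨N, hN⟩ := hMS ((X : Polynomial K) ^ 2) X hmem
  exact hnot (max N 1) (le_max_right _ _) (hN _ (le_max_left _ _))
end

section
/- Let K be a field (of arbitrary characteristic), w(x) ∈ K[x] with deg w ≥ 2, φ the K-algebra endomorphism of K[x] mapping x to w(x), and δ = I - φ. If f ∈ Im δ and f(x) = g(w(x)) for some g ∈ K[x], then g ∈ Im δ. -/
open Polynomial

theorem pullback_along_w {K : Type*} [Field K] (w : Polynomial K) (hw : 2 ≤ w.degree)
    (f g : Polynomial K)
    (hf : f ∈ LinearMap.range ((LinearMap.id : Polynomial K →ₗ[K] Polynomial K) -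
      (aeval w).toLinearMap))
    (hfg : f = g.comp w) :
    g ∈ LinearMap.range ((LinearMap.id : Polynomial K →ₗ[K] Polynomial K) -
      (aeval w).toLinearMap) := by
  obtain ⟨h, hh⟩ := hf
  refine ⟨g + h, ?_⟩
  simp only [LinearMap.sub_apply, LinearMap.id_apply, AlgHom.toLinearMap_apply,
    ← comp_eq_aeval, add_comp] at hh ⊢
  rw [← hfg] at *
  ring_nf
  ring_nf at hh
  linear_combination hh
end

section
/- Let K be a field of characteristic zero, c ∈ K nonzero, a ∈ K, β = a/c, φ the K-algebra endomorphism of K[x] mapping x to x + c, δ = I - φ, and I the ideal (x^2 - ax)K[x]. For each n ≥ 0 define D_n(t) ∈ ℚ[t] by D_n(t) = (1/(n+1)) Σ_{i=0}^n C(n+1, i) B_i t^{n-i}, where B_i are the Bernoulli numbers (B_1 = -1/2). Then for all n ≥ 0 one has x^n - D_n(β)·c^n ∈ δ(I), where D_n(β) ∈ K is the evaluation of D_n at β via the canonical map ℚ → K. -/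
open Polynomial

/-!
Let `Dₙ = faulhaber n` be the polynomial of the statement, so that
`t Dₙ(t) = (B_{n+1}(t) - B_{n+1}) / (n+1)`. The shift identity of the Bernoulli polynomials becomes
`(t+1) Dₙ(t+1) - t Dₙ(t) = tⁿ`, hence `F(t) = t (Dₙ(β) - Dₙ(t))` satisfies
`F(t) - F(t+1) = tⁿ - Dₙ(β)`, and `F` is divisible by `t (t - β)` because `t - β` divides
`Dₙ(β) - Dₙ(t)`. Substituting `t = x / c` turns the shift by `1` into the shift by `c` and
`t (t - β)` into a unit multiple of `x² - a x`, so `cⁿ F(x / c)` is an element of `I` whose image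
under `δ` is `xⁿ - Dₙ(β) cⁿ`.
-/

noncomputable def faulhaber (n : ℕ) : ℚ[X] :=
  C ((n + 1 : ℚ)⁻¹) *
    ∑ i ∈ Finset.range (n + 1), monomial (n - i) (_root_.bernoulli i * (n + 1).choose i)

theorem X_mul_faulhaber (n : ℕ) :
    X * faulhaber n =
      C ((n + 1 : ℚ)⁻¹) * (Polynomial.bernoulli (n + 1) - C (_root_.bernoulli (n + 1))) := by
  rw [faulhaber, Polynomial.bernoulli, Finset.sum_range_succ _ (n + 1), mul_left_comm,
    Finset.mul_sum]
  congr 1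
  simp only [Nat.sub_self, Nat.choose_self, Nat.cast_one, mul_one, monomial_zero_left,
    add_sub_cancel_right]
  refine Finset.sum_congr rfl fun i hi => ?_
  rw [X_mul_monomial, Nat.sub_add_comm (Nat.lt_succ_iff.mp (Finset.mem_range.mp hi))]

theorem faulhaber_telescope (n : ℕ) :
    (X + 1) * (faulhaber n).comp (X + 1) - X * faulhaber n = X ^ n := by
  have hshift : (X + 1) * (faulhaber n).comp (X + 1) = (X * faulhaber n).comp (1 + X) := by
    rw [mul_comp, X_comp, add_comm (1 : ℚ[X])]
  rw [hshift, X_mul_faulhaber, mul_comp, sub_comp, C_comp, C_comp, bernoulli_comp_one_add_X]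
  calc _ = C ((n + 1 : ℚ)⁻¹) * C ((n : ℚ) + 1) * X ^ n := by
        rw [Nat.add_sub_cancel, nsmul_eq_mul, C_add, C_1, C_eq_natCast]; push_cast; ring
    _ = X ^ n := by rw [← C_mul, inv_mul_cancel₀ (by positivity), C_1, one_mul]

theorem aeval_faulhaber {K : Type*} [Field K] [CharZero K] (n : ℕ) (x : K) :
    aeval x (faulhaber n) = ((n : K) + 1)⁻¹ *
      ∑ i ∈ Finset.range (n + 1),
        ((n + 1).choose i : K) * algebraMap ℚ K (_root_.bernoulli i) * x ^ (n - i) := by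
  simp [faulhaber, aeval_monomial, map_sum, mul_comm]

theorem X_mul_C_sub_sub_comp_X_add_one {R : Type*} [CommRing R] {E : R[X]} {n : ℕ}
    (hE : (X + 1) * E.comp (X + 1) - X * E = X ^ n) (b : R) :
    X * (C b - E) - (X * (C b - E)).comp (X + 1) = X ^ n - C b := by
  simp only [mul_comp, sub_comp, X_comp, C_comp]
  linear_combination hE

theorem X_mul_X_sub_C_dvd {K : Type*} [Field K] (E : K[X]) (b : K) :
    X * (X - C b) ∣ X * (C (E.eval b) - E) :=
  mul_dvd_mul_left X <| (neg_sub E _) ▸ dvd_neg.mpr X_sub_C_dvd_sub_C_eval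

section Rescaling

variable {K : Type*} [Field K] {c : K}

theorem X_sq_sub_C_mul_X_dvd_comp_C_inv_mul_X (a : K) {F : K[X]}
    (hF : X * (X - C (a / c)) ∣ F) : X ^ 2 - C a * X ∣ F.comp (C c⁻¹ * X) := by
  obtain ⟨q, rfl⟩ := hF
  have hscale :
      (X * (X - C (a / c))).comp (C c⁻¹ * X) = C (c⁻¹ ^ 2) * (X ^ 2 - C a * X) := by
    simp only [mul_comp, sub_comp, X_comp, C_comp, div_eq_mul_inv, C_mul, C_pow]
    ring
  rw [mul_comp, hscale]
  exact dvd_mul_of_dvd_left (dvd_mul_left _ _) _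

theorem comp_C_inv_mul_X_comp_X_add_C (hc : c ≠ 0) (F : K[X]) :
    (F.comp (C c⁻¹ * X)).comp (X + C c) = (F.comp (X + 1)).comp (C c⁻¹ * X) := by
  have hscale : (C c⁻¹ * X).comp (X + C c) = (X + 1).comp (C c⁻¹ * X) := by
    simp only [mul_comp, C_comp, X_comp, add_comp, one_comp]
    rw [mul_add, ← C_mul, inv_mul_cancel₀ hc, C_1]
  rw [comp_assoc, hscale, ← comp_assoc]

theorem C_pow_mul_comp_C_inv_mul_X_sub_comp_X_add_C (hc : c ≠ 0) {F : K[X]} {n : ℕ} {b : K}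
    (hF : F - F.comp (X + 1) = X ^ n - C b) :
    C (c ^ n) * F.comp (C c⁻¹ * X) - (C (c ^ n) * F.comp (C c⁻¹ * X)).comp (X + C c) =
      X ^ n - C (b * c ^ n) := by
  rw [mul_comp, C_comp, comp_C_inv_mul_X_comp_X_add_C hc, ← mul_sub, ← sub_comp, hF, sub_comp,
    X_pow_comp, C_comp, mul_pow, ← C_pow, mul_sub, ← mul_assoc, ← C_mul, ← mul_pow,
    mul_inv_cancel₀ hc, one_pow, C_1, one_mul, ← C_mul, mul_comm (c ^ n)]

end Rescaling

theorem powers_mod_delta_I {K : Type*} [Field K] [CharZero K] (c a : K) (hc : c ≠ 0)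
    (n : ℕ) :
    (X : Polynomial K) ^ n -
        C ((((n : K) + 1)⁻¹ *
            ∑ i ∈ Finset.range (n + 1),
              ((n + 1).choose i : K) * algebraMap ℚ K (bernoulli i) * (a / c) ^ (n - i)) *
          c ^ n) ∈
      Submodule.map ((LinearMap.id : Polynomial K →ₗ[K] Polynomial K) -
          (aeval (X + C c)).toLinearMap)
        (Submodule.restrictScalars K (Ideal.span {X ^ 2 - C a * X})) := by
  set D : K[X] := (faulhaber n).map (algebraMap ℚ K)
  have hD : (X + 1) * D.comp (X + 1) - X * D = X ^ n := by
    simpa [D, Polynomial.map_comp] using congrArg (map (algebraMap ℚ K)) (faulhaber_telescope n)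
  rw [← aeval_faulhaber, ← eval_map_algebraMap]
  set F : K[X] := X * (C (D.eval (a / c)) - D)
  refine ⟨C (c ^ n) * F.comp (C c⁻¹ * X), ?_, ?_⟩
  · exact Ideal.mem_span_singleton.mpr <| dvd_mul_of_dvd_right
      (X_sq_sub_C_mul_X_dvd_comp_C_inv_mul_X a (X_mul_X_sub_C_dvd D (a / c))) _
  · exact C_pow_mul_comp_C_inv_mul_X_sub_comp_X_add_C hc (X_mul_C_sub_sub_comp_X_add_one hD _)
end
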